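/- arXiv:1604.06302 — 4 statements merged into one kernel-verified Lean document; each statement's English description precedes it below -/
import Mathlib

section
/- Let D = (V, A) be a digraph with V = {v_1, ..., v_n} and let x_1, ..., x_n, y_1, ..., y_n and Δ* be nonnegative integers such that (I) Δ* ≤ n − 1, (II) deg_D^-(v_i) + x_i ≤ Δ* for all i ∈ {1, ..., n}, (III) deg_D^+(v_i) + y_i ≤ Δ* for all i ∈ {1, ..., n}, (IV) the sum of the x_i equals the sum of the y_i, calling this common value s, and (V) s > 2(Δ*)². Then there exists an arc set A' ⊆ (V × V) \ A containing no loops, with |A'| = s, such that in the digraph D' := D + A' every vertex satisfies deg_{D'}(v_i) = (deg_D^-(v_i) + x_i, deg_D^+(v_i) + y_i). -/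
def inDeg {V : Type*} [DecidableEq V] (A : Finset (V × V)) (v : V) : ℕ :=
  (A.filter fun a => a.2 = v).card

def outDeg {V : Type*} [DecidableEq V] (A : Finset (V × V)) (v : V) : ℕ :=
  (A.filter fun a => a.1 = v).card

namespace FlowReal
variable {n : ℕ}

lemma inDeg_insert (B : Finset (Fin n × Fin n)) (p : Fin n × Fin n) (hp : p ∉ B) (i : Fin n) :
    inDeg (insert p B) i = inDeg B i + if p.2 = i then 1 else 0 := by
  unfold inDeg
  rw [Finset.filter_insert]
  split_ifs with h
  · rw [Finset.card_insert_of_notMem fun hm => hp (Finset.mem_filter.mp hm).1]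
  · rfl

lemma outDeg_insert (B : Finset (Fin n × Fin n)) (p : Fin n × Fin n) (hp : p ∉ B) (i : Fin n) :
    outDeg (insert p B) i = outDeg B i + if p.1 = i then 1 else 0 := by
  unfold outDeg
  rw [Finset.filter_insert]
  split_ifs with h
  · rw [Finset.card_insert_of_notMem fun hm => hp (Finset.mem_filter.mp hm).1]
  · rfl

lemma inDeg_erase (B : Finset (Fin n × Fin n)) (p : Fin n × Fin n) (hp : p ∈ B) (i : Fin n) :
    inDeg (B.erase p) i + (if p.2 = i then 1 else 0) = inDeg B i := by
  unfold inDeg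
  have hfe : (B.erase p).filter (fun a => a.2 = i) = (B.filter (fun a => a.2 = i)).erase p := by
    ext q; simp only [Finset.mem_filter, Finset.mem_erase]; tauto
  rw [hfe]
  split_ifs with h
  · exact Finset.card_erase_add_one (Finset.mem_filter.2 ⟨hp, h⟩)
  · rw [Finset.erase_eq_of_notMem (s := B.filter fun a => a.2 = i) (a := p)
      fun hm => h (Finset.mem_filter.1 hm).2, Nat.add_zero]

lemma outDeg_erase (B : Finset (Fin n × Fin n)) (p : Fin n × Fin n) (hp : p ∈ B) (i : Fin n) :
    outDeg (B.erase p) i + (if p.1 = i then 1 else 0) = outDeg B i := by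
  unfold outDeg
  have hfe : (B.erase p).filter (fun a => a.1 = i) = (B.filter (fun a => a.1 = i)).erase p := by
    ext q; simp only [Finset.mem_filter, Finset.mem_erase]; tauto
  rw [hfe]
  split_ifs with h
  · exact Finset.card_erase_add_one (Finset.mem_filter.2 ⟨hp, h⟩)
  · rw [Finset.erase_eq_of_notMem (s := B.filter fun a => a.1 = i) (a := p)
      fun hm => h (Finset.mem_filter.1 hm).2, Nat.add_zero]


lemma bad_out (E C : Finset (Fin n × Fin n)) (hCE : C ⊆ E) (y : Fin n → ℕ) (Δ : ℕ) (v : Fin n)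
    (hdeg : ∀ i, outDeg E i + y i ≤ Δ)
    (hvin : inDeg E v + 1 ≤ Δ)
    (hS : ∀ u, 0 < y u → u = v ∨ (u, v) ∈ E) :
    (C.filter fun p => p.1 = v ∨ (p.1, v) ∈ E).card + ∑ i, y i ≤ Δ * Δ := by
  set K : Finset (Fin n) := insert v ((E.filter fun p => p.2 = v).image Prod.fst) with hK
  have hKcard : K.card ≤ Δ := by
    have h1 : K.card ≤ ((E.filter fun p => p.2 = v).image Prod.fst).card + 1 :=
      Finset.card_insert_le _ _
    have h2 : ((E.filter fun p => p.2 = v).image Prod.fst).card ≤ inDeg E v :=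
      Finset.card_image_le
    omega
  have hsub : (C.filter fun p => p.1 = v ∨ (p.1, v) ∈ E) ⊆
      K.biUnion fun a => C.filter fun p => p.1 = a := by
    intro p hp
    rw [Finset.mem_filter] at hp
    refine Finset.mem_biUnion.2 ⟨p.1, ?_, Finset.mem_filter.2 ⟨hp.1, rfl⟩⟩
    rcases hp.2 with h | h
    · exact h ▸ Finset.mem_insert_self _ _
    · exact Finset.mem_insert_of_mem
        (Finset.mem_image.2 ⟨(p.1, v), Finset.mem_filter.2 ⟨h, rfl⟩, rfl⟩)
  have hyK : ∑ i, y i = ∑ a ∈ K, y a := by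
    refine (Finset.sum_subset (Finset.subset_univ K) ?_).symm
    intro a _ haK
    by_contra h
    rcases hS a (Nat.pos_of_ne_zero h) with rfl | hmem
    · exact haK (Finset.mem_insert_self _ _)
    · exact haK (Finset.mem_insert_of_mem
        (Finset.mem_image.2 ⟨(a, v), Finset.mem_filter.2 ⟨hmem, rfl⟩, rfl⟩))
  calc (C.filter fun p => p.1 = v ∨ (p.1, v) ∈ E).card + ∑ i, y i
      ≤ (K.biUnion fun a => C.filter fun p => p.1 = a).card + ∑ a ∈ K, y a := by
        rw [← hyK]; exact Nat.add_le_add_right (Finset.card_le_card hsub) _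
    _ ≤ (∑ a ∈ K, (C.filter fun p => p.1 = a).card) + ∑ a ∈ K, y a :=
        Nat.add_le_add_right (Finset.card_biUnion_le) _
    _ = ∑ a ∈ K, ((C.filter fun p => p.1 = a).card + y a) := Finset.sum_add_distrib.symm
    _ ≤ ∑ _a ∈ K, Δ := by
        refine Finset.sum_le_sum fun a _ => ?_
        have h1 : (C.filter fun p => p.1 = a).card ≤ outDeg E a :=
          Finset.card_le_card (Finset.filter_subset_filter _ hCE)
        have h2 := hdeg a
        omega
    _ = K.card * Δ := by rw [Finset.sum_const, smul_eq_mul]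
    _ ≤ Δ * Δ := Nat.mul_le_mul_right _ hKcard

lemma bad_in (E C : Finset (Fin n × Fin n)) (hCE : C ⊆ E) (x : Fin n → ℕ) (Δ : ℕ) (u : Fin n)
    (hdeg : ∀ i, inDeg E i + x i ≤ Δ)
    (huout : outDeg E u + 1 ≤ Δ)
    (hT : ∀ w, 0 < x w → w = u ∨ (u, w) ∈ E) :
    (C.filter fun p => p.2 = u ∨ (u, p.2) ∈ E).card + ∑ i, x i ≤ Δ * Δ := by
  set K : Finset (Fin n) := insert u ((E.filter fun p => p.1 = u).image Prod.snd) with hK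
  have hKcard : K.card ≤ Δ := by
    have h1 : K.card ≤ ((E.filter fun p => p.1 = u).image Prod.snd).card + 1 :=
      Finset.card_insert_le _ _
    have h2 : ((E.filter fun p => p.1 = u).image Prod.snd).card ≤ outDeg E u :=
      Finset.card_image_le
    omega
  have hsub : (C.filter fun p => p.2 = u ∨ (u, p.2) ∈ E) ⊆
      K.biUnion fun a => C.filter fun p => p.2 = a := by
    intro p hp
    rw [Finset.mem_filter] at hp
    refine Finset.mem_biUnion.2 ⟨p.2, ?_, Finset.mem_filter.2 ⟨hp.1, rfl⟩⟩
    rcases hp.2 with h | h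
    · exact h ▸ Finset.mem_insert_self _ _
    · exact Finset.mem_insert_of_mem
        (Finset.mem_image.2 ⟨(u, p.2), Finset.mem_filter.2 ⟨h, rfl⟩, rfl⟩)
  have hxK : ∑ i, x i = ∑ a ∈ K, x a := by
    refine (Finset.sum_subset (Finset.subset_univ K) ?_).symm
    intro a _ haK
    by_contra h
    rcases hT a (Nat.pos_of_ne_zero h) with rfl | hmem
    · exact haK (Finset.mem_insert_self _ _)
    · exact haK (Finset.mem_insert_of_mem
        (Finset.mem_image.2 ⟨(u, a), Finset.mem_filter.2 ⟨hmem, rfl⟩, rfl⟩))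
  calc (C.filter fun p => p.2 = u ∨ (u, p.2) ∈ E).card + ∑ i, x i
      ≤ (K.biUnion fun a => C.filter fun p => p.2 = a).card + ∑ a ∈ K, x a := by
        rw [← hxK]; exact Nat.add_le_add_right (Finset.card_le_card hsub) _
    _ ≤ (∑ a ∈ K, (C.filter fun p => p.2 = a).card) + ∑ a ∈ K, x a :=
        Nat.add_le_add_right (Finset.card_biUnion_le) _
    _ = ∑ a ∈ K, ((C.filter fun p => p.2 = a).card + x a) := Finset.sum_add_distrib.symm
    _ ≤ ∑ _a ∈ K, Δ := by
        refine Finset.sum_le_sum fun a _ => ?_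
        have h1 : (C.filter fun p => p.2 = a).card ≤ inDeg E a :=
          Finset.card_le_card (Finset.filter_subset_filter _ hCE)
        have h2 := hdeg a
        omega
    _ = K.card * Δ := by rw [Finset.sum_const, smul_eq_mul]
    _ ≤ Δ * Δ := Nat.mul_le_mul_right _ hKcard

lemma main (A : Finset (Fin n × Fin n))
    (Δ s : ℕ) (hV : 2 * Δ ^ 2 < s) :
    ∀ s' (C : Finset (Fin n × Fin n)) (x y : Fin n → ℕ),
      (∀ a ∈ C, a ∉ A) → (∀ v : Fin n, (v, v) ∉ C) →
      (∀ i, inDeg (A ∪ C) i + x i ≤ Δ) → (∀ i, outDeg (A ∪ C) i + y i ≤ Δ) →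
      ∑ i, x i = s' → ∑ i, y i = s' → C.card + s' = s →
      ∃ C' : Finset (Fin n × Fin n),
        (∀ a ∈ C', a ∉ A) ∧ (∀ v : Fin n, (v, v) ∉ C') ∧ C'.card = s ∧
        (∀ i, inDeg (A ∪ C') i = inDeg (A ∪ C) i + x i ∧
              outDeg (A ∪ C') i = outDeg (A ∪ C) i + y i) := by
  intro s'
  induction s' with
  | zero =>
    intro C x y hCA hCl hII hIII hx hy hcard
    have hx0 : ∀ i, x i = 0 := fun i =>
      Finset.sum_eq_zero_iff.mp hx i (Finset.mem_univ i)
    have hy0 : ∀ i, y i = 0 := fun i =>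
      Finset.sum_eq_zero_iff.mp hy i (Finset.mem_univ i)
    exact ⟨C, hCA, hCl, by omega, fun i => by simp [hx0 i, hy0 i]⟩
  | succ s' IH =>
    intro C x y hCA hCl hII hIII hx hy hcard
    obtain ⟨C2, u, v, hyu, hxv, h2A, h2l, h2card, h2in, h2out⟩ :
        ∃ (C2 : Finset (Fin n × Fin n)) (u v : Fin n), 0 < y u ∧ 0 < x v ∧
          (∀ a ∈ C2, a ∉ A) ∧ (∀ w : Fin n, (w, w) ∉ C2) ∧ C2.card = C.card + 1 ∧
          (∀ i, inDeg (A ∪ C2) i = inDeg (A ∪ C) i + (if v = i then 1 else 0)) ∧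
          (∀ i, outDeg (A ∪ C2) i = outDeg (A ∪ C) i + (if u = i then 1 else 0)) := by
      by_cases hg : ∃ u v : Fin n, 0 < y u ∧ 0 < x v ∧ u ≠ v ∧ (u, v) ∉ A ∪ C
      · -- greedy step
        obtain ⟨u, v, hyu, hxv, huv, hnm⟩ := hg
        have hnC : (u, v) ∉ C := fun h => hnm (Finset.mem_union_right _ h)
        have hnA : (u, v) ∉ A := fun h => hnm (Finset.mem_union_left _ h)
        refine ⟨insert (u, v) C, u, v, hyu, hxv, ?_, ?_, Finset.card_insert_of_notMem hnC,
          fun i => ?_, fun i => ?_⟩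
        · intro a ha
          rcases Finset.mem_insert.1 ha with rfl | ha
          · exact hnA
          · exact hCA a ha
        · intro w hw
          rcases Finset.mem_insert.1 hw with h | h
          · exact huv (by injection h.symm with h1 h2; rw [h1, h2])
          · exact hCl w h
        · rw [Finset.union_insert, inDeg_insert _ _ hnm]
        · rw [Finset.union_insert, outDeg_insert _ _ hnm]
      · -- stuck: exchange step
        push_neg at hg
        obtain ⟨v, hxv⟩ : ∃ v, 0 < x v := by
          by_contra h
          push_neg at h
          have : ∑ i, x i = 0 := Finset.sum_eq_zero fun i _ => by have := h i; omega
          omega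
        obtain ⟨u, hyu⟩ : ∃ u, 0 < y u := by
          by_contra h
          push_neg at h
          have : ∑ i, y i = 0 := Finset.sum_eq_zero fun i _ => by have := h i; omega
          omega
        set E := A ∪ C with hE
        have hCE : C ⊆ E := Finset.subset_union_right
        have hSv : ∀ w, 0 < y w → w = v ∨ (w, v) ∈ E := by
          intro w hw
          by_cases h : w = v
          · exact Or.inl h
          · exact Or.inr (hg w v hw hxv h)
        have hTu : ∀ w, 0 < x w → w = u ∨ (u, w) ∈ E := by
          intro w hw
          by_cases h : w = u
          · exact Or.inl h
          · exact Or.inr (hg u w hyu hw fun e => h e.symm)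
        have hvin : inDeg E v + 1 ≤ Δ := by have := hII v; omega
        have huout : outDeg E u + 1 ≤ Δ := by have := hIII u; omega
        have hbadA := bad_out E C hCE y Δ v hIII hvin hSv
        have hbadB := bad_in E C hCE x Δ u hII huout hTu
        set badA := C.filter fun p => p.1 = v ∨ (p.1, v) ∈ E with hbA
        set badB := C.filter fun p => p.2 = u ∨ (u, p.2) ∈ E with hbB
        have hlt : badA.card + badB.card < C.card := by
          have hΔ : Δ ^ 2 = Δ * Δ := sq Δ
          omega
        have hne : (C \ (badA ∪ badB)).Nonempty := by
          rw [← Finset.card_pos]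
          have hsub : C ⊆ (badA ∪ badB) ∪ (C \ (badA ∪ badB)) := by
            intro p hp
            by_cases h : p ∈ badA ∪ badB
            · exact Finset.mem_union_left _ h
            · exact Finset.mem_union_right _ (Finset.mem_sdiff.2 ⟨hp, h⟩)
          have h1 := Finset.card_le_card hsub
          have h2 := Finset.card_union_le (badA ∪ badB) (C \ (badA ∪ badB))
          have h3 := Finset.card_union_le badA badB
          omega
        obtain ⟨⟨a, b⟩, hab⟩ := hne
        rw [Finset.mem_sdiff] at hab
        obtain ⟨habC, habn⟩ := hab
        have ha : ¬(a = v ∨ (a, v) ∈ E) := fun h =>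
          habn (Finset.mem_union_left _ (Finset.mem_filter.2 ⟨habC, h⟩))
        have hb : ¬(b = u ∨ (u, b) ∈ E) := fun h =>
          habn (Finset.mem_union_right _ (Finset.mem_filter.2 ⟨habC, h⟩))
        push_neg at ha hb
        have habE : (a, b) ∈ E := hCE habC
        have hne1 : (a, v) ≠ (u, b) := by
          intro h
          have h1 : a = u := congrArg Prod.fst h
          have h2 : v = b := congrArg Prod.snd h
          by_cases huv : u = v
          · exact ha.1 (h1.trans huv)
          · exact ha.2 (by rw [h1]; rw [← h2] at hb; exact hg u v hyu hxv huv)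
        have havE : (a, v) ∉ E := ha.2
        have hubE : (u, b) ∉ E := hb.2
        have havC : (a, v) ∉ C.erase (a, b) := fun h =>
          havE (hCE (Finset.mem_of_mem_erase h))
        have hubC : (u, b) ∉ insert (a, v) (C.erase (a, b)) := by
          intro h
          rcases Finset.mem_insert.1 h with h | h
          · exact hne1 h.symm
          · exact hubE (hCE (Finset.mem_of_mem_erase h))
        have havE' : (a, v) ∉ E.erase (a, b) := fun h => havE (Finset.mem_of_mem_erase h)
        have hubE' : (u, b) ∉ insert (a, v) (E.erase (a, b)) := by
          intro h
          rcases Finset.mem_insert.1 h with h | h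
          · exact hne1 h.symm
          · exact hubE (Finset.mem_of_mem_erase h)
        have habA : (a, b) ∉ A := hCA _ habC
        have hEq : A ∪ insert (u, b) (insert (a, v) (C.erase (a, b))) =
            insert (u, b) (insert (a, v) (E.erase (a, b))) := by
          rw [Finset.union_insert, Finset.union_insert]
          congr 2
          ext p
          simp only [Finset.mem_union, Finset.mem_erase, hE]
          constructor
          · rintro (h | ⟨hp, h⟩)
            · exact ⟨fun e => habA (e ▸ h), Or.inl h⟩
            · exact ⟨hp, Or.inr h⟩
          · rintro ⟨hp, h | h⟩
            · exact Or.inl h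
            · exact Or.inr ⟨hp, h⟩
        refine ⟨insert (u, b) (insert (a, v) (C.erase (a, b))), u, v, hyu, hxv, ?_, ?_, ?_,
          fun i => ?_, fun i => ?_⟩
        · intro p hp
          rcases Finset.mem_insert.1 hp with rfl | hp
          · exact fun h => hubE (Finset.mem_union_left _ h)
          rcases Finset.mem_insert.1 hp with rfl | hp
          · exact fun h => havE (Finset.mem_union_left _ h)
          · exact hCA _ (Finset.mem_of_mem_erase hp)
        · intro w hw
          rcases Finset.mem_insert.1 hw with h | hw
          · have h1 : w = u := congrArg Prod.fst h
            have h2 : w = b := congrArg Prod.snd h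
            exact hb.1 (h2 ▸ h1 ▸ rfl : b = u)
          rcases Finset.mem_insert.1 hw with h | hw
          · have h1 : w = a := congrArg Prod.fst h
            have h2 : w = v := congrArg Prod.snd h
            exact ha.1 (h2 ▸ h1 ▸ rfl : a = v)
          · exact hCl w (Finset.mem_of_mem_erase hw)
        · rw [Finset.card_insert_of_notMem hubC, Finset.card_insert_of_notMem havC,
            Finset.card_erase_of_mem habC]
          have : 1 ≤ C.card := Finset.card_pos.2 ⟨_, habC⟩
          omega
        · -- inDeg
          rw [hEq, inDeg_insert _ _ hubE', inDeg_insert _ _ havE']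
          have he := inDeg_erase E (a, b) habE i
          simp only at he ⊢
          by_cases h1 : v = i <;> by_cases h2 : b = i <;>
            simp only [h1, h2, if_pos, if_neg, if_true] at he ⊢ <;> omega
        · -- outDeg
          rw [hEq, outDeg_insert _ _ hubE', outDeg_insert _ _ havE']
          have he := outDeg_erase E (a, b) habE i
          simp only at he ⊢
          by_cases h1 : u = i <;> by_cases h2 : a = i <;>
            simp only [h1, h2, if_pos, if_neg, if_true] at he ⊢ <;> omega
    -- common part
    set x' : Fin n → ℕ := fun i => if v = i then x i - 1 else x i with hx'def
    set y' : Fin n → ℕ := fun i => if u = i then y i - 1 else y i with hy'def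
    have hsum : ∀ (f : Fin n → ℕ) (w : Fin n), 0 < f w →
        ∑ i, (if w = i then f i - 1 else f i) + 1 = ∑ i, f i := by
      intro f w hw
      have h1 : ∑ i, (if w = i then (1:ℕ) else 0) = 1 := by simp
      have h2 : ∑ i, (if w = i then f i - 1 else f i) + ∑ i, (if w = i then (1:ℕ) else 0)
          = ∑ i, f i := by
        rw [← Finset.sum_add_distrib]
        refine Finset.sum_congr rfl fun i _ => ?_
        by_cases h : w = i
        · subst h; simp; omega
        · simp [h]
      omega
    have hx' : ∑ i, x' i = s' := by
      have := hsum x v hxv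
      simp only [hx'def]
      omega
    have hy' : ∑ i, y' i = s' := by
      have := hsum y u hyu
      simp only [hy'def]
      omega
    have hII' : ∀ i, inDeg (A ∪ C2) i + x' i ≤ Δ := by
      intro i
      have h1 := hII i
      have h2 := h2in i
      simp only [hx'def]
      by_cases h : v = i
      · subst h; simp at h2 ⊢; omega
      · simp [h] at h2 ⊢; omega
    have hIII' : ∀ i, outDeg (A ∪ C2) i + y' i ≤ Δ := by
      intro i
      have h1 := hIII i
      have h2 := h2out i
      simp only [hy'def]
      by_cases h : u = i
      · subst h; simp at h2 ⊢; omega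
      · simp [h] at h2 ⊢; omega
    obtain ⟨C', hc1, hc2, hc3, hc4⟩ := IH C2 x' y' h2A h2l hII' hIII' hx' hy' (by omega)
    refine ⟨C', hc1, hc2, hc3, fun i => ?_⟩
    obtain ⟨hi, ho⟩ := hc4 i
    constructor
    · rw [hi, h2in i]
      simp only [hx'def]
      by_cases h : v = i
      · subst h; simp; omega
      · simp [h]
    · rw [ho, h2out i]
      simp only [hy'def]
      by_cases h : u = i
      · subst h; simp; omega
      · simp [h]

end FlowReal

/-- **Flow-based realization lemma.** Given a loopless digraph on `Fin n` and demands
`x i` (indegree increases) and `y i` (outdegree increases) satisfying conditions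
(I)–(V), there is a loopless arc set `A'` disjoint from `A` of size exactly `s`
realizing all demands. -/
theorem flow_realization (n : ℕ) (A : Finset (Fin n × Fin n))
    (hA : ∀ v : Fin n, (v, v) ∉ A)
    (x y : Fin n → ℕ) (Δ s : ℕ)
    (hI : Δ ≤ n - 1)
    (hII : ∀ i : Fin n, inDeg A i + x i ≤ Δ)
    (hIII : ∀ i : Fin n, outDeg A i + y i ≤ Δ)
    (hIVx : ∑ i, x i = s) (hIVy : ∑ i, y i = s)
    (hV : s > 2 * Δ ^ 2) :
    ∃ A' : Finset (Fin n × Fin n),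
      (∀ a ∈ A', a ∉ A) ∧
      (∀ v : Fin n, (v, v) ∉ A') ∧
      A'.card = s ∧
      (∀ i : Fin n,
        inDeg (A ∪ A') i = inDeg A i + x i ∧
        outDeg (A ∪ A') i = outDeg A i + y i) := by
  obtain ⟨C', h1, h2, h3, h4⟩ := FlowReal.main A Δ s hV s ∅ x y
    (by simp) (by simp)
    (by simpa using hII) (by simpa using hIII)
    hIVx hIVy (by simp)
  refine ⟨C', h1, h2, h3, fun i => ?_⟩
  have := h4 i
  simpa using this
end

section
/- Let D = (V, A) be a digraph with V = {v_1, ..., v_n}, let τ map each vertex to a set of pairs of nonnegative integers, let Π be a sequence property, and let Δ* be a nonnegative integer with Δ* ≤ n − 1 such that c ≤ Δ* and d ≤ Δ* for every vertex v and every pair (c, d) ∈ τ(v). Suppose there exist pairs (c_1', d_1'), ..., (c_n', d_n') and an integer s' with 2(Δ*)² < s' such that (c_i', d_i') ∈ τ(v_i), c_i' ≥ deg_D^-(v_i) and d_i' ≥ deg_D^+(v_i) for all i, the total increase in the first components Σ_i (c_i' − deg_D^-(v_i)) and in the second components Σ_i (d_i' − deg_D^+(v_i)) both equal s', and the multiset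 {(c_1', d_1'), ..., (c_n', d_n')} fulfills Π. Then there exists a loopless arc set A' ⊆ (V × V) \ A with |A'| = s' such that deg_{D+A'}(v_i) = (c_i', d_i') for every i; in particular, D + A' satisfies deg_{D+A'}(v) ∈ τ(v) for all v ∈ V and its degree sequence fulfills Π. -/
/-- Degree pair (indegree, outdegree) of vertex `v`. -/
def deg {V : Type*} [DecidableEq V] (A : Finset (V × V)) (v : V) : ℕ × ℕ :=
  (inDeg A v, outDeg A v)

/-- Degree sequence of the digraph with arc set `A`. -/
def degSeq {V : Type*} [Fintype V] [DecidableEq V] (A : Finset (V × V)) :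
    Multiset (ℕ × ℕ) :=
  Finset.univ.val.map (deg A)

section helpers
variable {V : Type*} [DecidableEq V]

lemma inDeg_insert' (x y : V) (s : Finset (V × V)) (h : (x, y) ∉ s) (w : V) :
    inDeg (insert (x, y) s) w = inDeg s w + if y = w then 1 else 0 := by
  unfold inDeg
  rw [Finset.filter_insert]
  by_cases hw : y = w
  · subst hw
    rw [if_pos rfl, if_pos rfl]
    have hnm : (x, y) ∉ Finset.filter (fun a : V × V => a.2 = y) s :=
      fun hm => h (Finset.mem_of_mem_filter _ hm)
    rw [Finset.card_insert_of_notMem hnm]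
  · simp only [hw, if_false, if_neg hw, add_zero]

lemma inDeg_erase' (x y : V) (s : Finset (V × V)) (h : (x, y) ∈ s) (w : V) :
    inDeg (s.erase (x, y)) w + (if y = w then 1 else 0) = inDeg s w := by
  unfold inDeg
  rw [Finset.filter_erase]
  by_cases hw : y = w
  · rw [if_pos hw, Finset.card_erase_add_one (Finset.mem_filter.mpr ⟨h, hw⟩)]
  · have hnm : (x, y) ∉ Finset.filter (fun a : V × V => a.2 = w) s :=
      fun hm => hw (Finset.mem_filter.mp hm).2
    rw [if_neg hw, add_zero, Finset.erase_eq_of_notMem hnm]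

lemma outDeg_insert' (x y : V) (s : Finset (V × V)) (h : (x, y) ∉ s) (w : V) :
    outDeg (insert (x, y) s) w = outDeg s w + if x = w then 1 else 0 := by
  unfold outDeg
  rw [Finset.filter_insert]
  by_cases hw : x = w
  · subst hw
    rw [if_pos rfl, if_pos rfl]
    have hnm : (x, y) ∉ Finset.filter (fun a : V × V => a.1 = x) s :=
      fun hm => h (Finset.mem_of_mem_filter _ hm)
    rw [Finset.card_insert_of_notMem hnm]
  · simp only [hw, if_false, if_neg hw, add_zero]

lemma outDeg_erase' (x y : V) (s : Finset (V × V)) (h : (x, y) ∈ s) (w : V) :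
    outDeg (s.erase (x, y)) w + (if x = w then 1 else 0) = outDeg s w := by
  unfold outDeg
  rw [Finset.filter_erase]
  by_cases hw : x = w
  · rw [if_pos hw, Finset.card_erase_add_one (Finset.mem_filter.mpr ⟨h, hw⟩)]
  · have hnm : (x, y) ∉ Finset.filter (fun a : V × V => a.1 = w) s :=
      fun hm => hw (Finset.mem_filter.mp hm).2
    rw [if_neg hw, add_zero, Finset.erase_eq_of_notMem hnm]

lemma union_erase_eq (A s : Finset (V × V)) (e : V × V) (h : e ∉ A) :
    A ∪ s.erase e = (A ∪ s).erase e := by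
  ext a
  simp only [Finset.mem_union, Finset.mem_erase]
  constructor
  · rintro (ha | ⟨hne, ha⟩)
    · exact ⟨fun he => h (he ▸ ha), Or.inl ha⟩
    · exact ⟨hne, Or.inr ha⟩
  · rintro ⟨hne, ha | ha⟩
    · exact Or.inl ha
    · exact Or.inr ⟨hne, ha⟩

end helpers

lemma sum_dec {n : ℕ} (c g : Fin n → ℕ) (hle : ∀ w, g w ≤ c w) (v : Fin n)
    (hv : 1 ≤ c v - g v) (t : ℕ) (h : ∑ w, (c w - g w) = t + 1) :
    ∑ w, (c w - (g w + if v = w then 1 else 0)) = t := by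
  have h1 : ∀ w ∈ Finset.univ.erase v, c w - (g w + if v = w then 1 else 0) = c w - g w := by
    intro w hw
    rw [if_neg (fun hvw => (Finset.mem_erase.mp hw).1 hvw.symm), add_zero]
  rw [← Finset.add_sum_erase _ _ (Finset.mem_univ v), Finset.sum_congr rfl h1, if_pos rfl]
  rw [← Finset.add_sum_erase _ _ (Finset.mem_univ v)] at h
  have := hle v
  omega

lemma main_realize {n Δ : ℕ} (hΔ : 1 ≤ Δ) (A : Finset (Fin n × Fin n))
    (c' d' : Fin n → ℕ) (hcΔ : ∀ v, c' v ≤ Δ) (hdΔ : ∀ v, d' v ≤ Δ) :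
    ∀ t : ℕ, ∀ A' : Finset (Fin n × Fin n),
      (∀ a ∈ A', a ∉ A) → (∀ v : Fin n, (v, v) ∉ A') →
      (∀ v, inDeg (A ∪ A') v ≤ c' v) → (∀ v, outDeg (A ∪ A') v ≤ d' v) →
      (∑ v, (c' v - inDeg (A ∪ A') v) = t) → (∑ v, (d' v - outDeg (A ∪ A') v) = t) →
      2 * Δ ^ 2 < A'.card + t →
      ∃ A'' : Finset (Fin n × Fin n),
        (∀ a ∈ A'', a ∉ A) ∧ (∀ v : Fin n, (v, v) ∉ A'') ∧ A''.card = A'.card + t ∧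
        (∀ w, inDeg (A ∪ A'') w = c' w ∧ outDeg (A ∪ A'') w = d' w) := by
  intro t
  induction t with
  | zero =>
    intro A' h1 h2 h3 h4 h5 h6 _
    refine ⟨A', h1, h2, by omega, fun w => ?_⟩
    have hc0 : c' w - inDeg (A ∪ A') w = 0 :=
      Finset.sum_eq_zero_iff.mp h5 w (Finset.mem_univ w)
    have hd0 : d' w - outDeg (A ∪ A') w = 0 :=
      Finset.sum_eq_zero_iff.mp h6 w (Finset.mem_univ w)
    have := h3 w; have := h4 w
    constructor <;> omega
  | succ t IH =>
    intro A' h1 h2 h3 h4 h5 h6 hbig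
    set B := A ∪ A' with hB
    have hA'B : A' ⊆ B := Finset.subset_union_right
    have hAB : A ⊆ B := Finset.subset_union_left
    -- the common final step
    have key : ∀ (u v : Fin n) (A2 : Finset (Fin n × Fin n)),
        (∀ a ∈ A2, a ∉ A) → (∀ w : Fin n, (w, w) ∉ A2) → A2.card = A'.card + 1 →
        (∀ w, inDeg (A ∪ A2) w = inDeg B w + if v = w then 1 else 0) →
        (∀ w, outDeg (A ∪ A2) w = outDeg B w + if u = w then 1 else 0) →
        1 ≤ c' v - inDeg B v → 1 ≤ d' u - outDeg B u →
        ∃ A'' : Finset (Fin n × Fin n),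
          (∀ a ∈ A'', a ∉ A) ∧ (∀ w : Fin n, (w, w) ∉ A'') ∧ A''.card = A'.card + (t + 1) ∧
          (∀ w, inDeg (A ∪ A'') w = c' w ∧ outDeg (A ∪ A'') w = d' w) := by
      intro u v A2 k1 k2 k3 k4 k5 hav hbu
      have hin2 : ∀ w, inDeg (A ∪ A2) w ≤ c' w := by
        intro w
        have h := k4 w
        rcases eq_or_ne v w with rfl | hne
        · rw [if_pos rfl] at h; have := h3 v; omega
        · rw [if_neg hne] at h; have := h3 w; omega
      have hout2 : ∀ w, outDeg (A ∪ A2) w ≤ d' w := by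
        intro w
        have h := k5 w
        rcases eq_or_ne u w with rfl | hne
        · rw [if_pos rfl] at h; have := h4 u; omega
        · rw [if_neg hne] at h; have := h4 w; omega
      have hs1 : ∑ w, (c' w - inDeg (A ∪ A2) w) = t := by
        rw [Finset.sum_congr rfl (fun w _ => by rw [k4 w])]
        exact sum_dec c' (fun w => inDeg B w) h3 v hav t h5
      have hs2 : ∑ w, (d' w - outDeg (A ∪ A2) w) = t := by
        rw [Finset.sum_congr rfl (fun w _ => by rw [k5 w])]
        exact sum_dec d' (fun w => outDeg B w) h4 u hbu t h6
      obtain ⟨A'', g1, g2, g3, g4⟩ := IH A2 k1 k2 hin2 hout2 hs1 hs2 (by omega)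
      exact ⟨A'', g1, g2, by omega, g4⟩
    by_cases hdirect : ∃ u v : Fin n,
        1 ≤ d' u - outDeg B u ∧ 1 ≤ c' v - inDeg B v ∧ u ≠ v ∧ (u, v) ∉ B
    · obtain ⟨u, v, hbu, hav, huv, hnB⟩ := hdirect
      have hnA' : (u, v) ∉ A' := fun h => hnB (hA'B h)
      refine key u v (insert (u, v) A') ?_ ?_ ?_ ?_ ?_ hav hbu
      · intro a ha
        rcases Finset.mem_insert.mp ha with rfl | ha
        · exact fun h => hnB (hAB h)
        · exact h1 a ha
      · intro w hw
        rcases Finset.mem_insert.mp hw with h | h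
        · rw [Prod.mk.injEq] at h
          exact huv (h.1.symm.trans h.2)
        · exact h2 w h
      · exact Finset.card_insert_of_notMem hnA'
      · intro w
        rw [Finset.union_insert, inDeg_insert' u v B hnB w]
      · intro w
        rw [Finset.union_insert, outDeg_insert' u v B hnB w]
    · push_neg at hdirect
      -- pick u with out-demand and v with in-demand
      have hu : ∃ u, 1 ≤ d' u - outDeg B u := by
        by_contra hno
        push_neg at hno
        have : ∑ w, (d' w - outDeg B w) = 0 :=
          Finset.sum_eq_zero fun w _ => by have := hno w; omega
        omega
      have hv : ∃ v, 1 ≤ c' v - inDeg B v := by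
        by_contra hno
        push_neg at hno
        have : ∑ w, (c' w - inDeg B w) = 0 :=
          Finset.sum_eq_zero fun w _ => by have := hno w; omega
        omega
      obtain ⟨u, hbu⟩ := hu
      obtain ⟨v, hav⟩ := hv
      set H : Finset (Fin n) := insert u ((B.filter fun e => e.1 = u).image Prod.snd) with hHdef
      set T : Finset (Fin n) := insert v ((B.filter fun e => e.2 = v).image Prod.fst) with hTdef
      have hHcard : H.card ≤ Δ := by
        have h1' : H.card ≤ ((B.filter fun e => e.1 = u).image Prod.snd).card + 1 :=
          Finset.card_insert_le _ _
        have h2' : ((B.filter fun e => e.1 = u).image Prod.snd).card ≤ outDeg B u :=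
          Finset.card_image_le
        have := hdΔ u
        omega
      have hTcard : T.card ≤ Δ := by
        have h1' : T.card ≤ ((B.filter fun e => e.2 = v).image Prod.fst).card + 1 :=
          Finset.card_insert_le _ _
        have h2' : ((B.filter fun e => e.2 = v).image Prod.fst).card ≤ inDeg B v :=
          Finset.card_image_le
        have := hcΔ v
        omega
      have hWH : ∀ y, 1 ≤ c' y - inDeg B y → y ∈ H := by
        intro y hy
        rcases eq_or_ne y u with rfl | hne
        · exact Finset.mem_insert_self _ _
        · have hB' : (u, y) ∈ B := hdirect u y hbu hy (Ne.symm hne)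
          exact Finset.mem_insert_of_mem
            (Finset.mem_image.mpr ⟨(u, y), Finset.mem_filter.mpr ⟨hB', rfl⟩, rfl⟩)
      have hWT : ∀ x, 1 ≤ d' x - outDeg B x → x ∈ T := by
        intro x hx
        rcases eq_or_ne x v with rfl | hne
        · exact Finset.mem_insert_self _ _
        · have hB' : (x, v) ∈ B := hdirect x v hx hav hne
          exact Finset.mem_insert_of_mem
            (Finset.mem_image.mpr ⟨(x, v), Finset.mem_filter.mpr ⟨hB', rfl⟩, rfl⟩)
      have hsumH : ∑ y ∈ H, (c' y - inDeg B y) = t + 1 := by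
        rw [← h5]
        exact Finset.sum_subset (Finset.subset_univ H)
          (fun y _ hy => by by_contra h0; exact hy (hWH y (by omega)))
      have hsumT : ∑ x ∈ T, (d' x - outDeg B x) = t + 1 := by
        rw [← h6]
        exact Finset.sum_subset (Finset.subset_univ T)
          (fun x _ hx => by by_contra h0; exact hx (hWT x (by omega)))
      set badH : Finset (Fin n × Fin n) := A'.filter (fun e => e.2 ∈ H) with hbadHdef
      set badT : Finset (Fin n × Fin n) := A'.filter (fun e => e.1 ∈ T) with hbadTdef
      have hbadHcard : badH.card + (t + 1) ≤ Δ * Δ := by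
        have hfib : badH.card = ∑ y ∈ H, (badH.filter fun e => e.2 = y).card :=
          Finset.card_eq_sum_card_fiberwise (fun e he => (Finset.mem_filter.mp he).2)
        have hle1 : ∀ y, (badH.filter fun e => e.2 = y).card ≤ inDeg B y := by
          intro y
          apply Finset.card_le_card
          intro e he
          have h' := Finset.mem_filter.mp he
          exact Finset.mem_filter.mpr ⟨hA'B (Finset.mem_of_mem_filter _ h'.1), h'.2⟩
        have hsum1 : badH.card ≤ ∑ y ∈ H, inDeg B y := by
          rw [hfib]; exact Finset.sum_le_sum fun y _ => hle1 y
        have hsum2 : ∑ y ∈ H, inDeg B y + ∑ y ∈ H, (c' y - inDeg B y) = ∑ y ∈ H, c' y := by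
          rw [← Finset.sum_add_distrib]
          exact Finset.sum_congr rfl fun y _ => by have := h3 y; omega
        have hsum3 : ∑ y ∈ H, c' y ≤ Δ * Δ := by
          calc ∑ y ∈ H, c' y ≤ ∑ _y ∈ H, Δ := Finset.sum_le_sum fun y _ => hcΔ y
          _ = H.card * Δ := by rw [Finset.sum_const, smul_eq_mul]
          _ ≤ Δ * Δ := Nat.mul_le_mul_right Δ hHcard
        omega
      have hbadTcard : badT.card + (t + 1) ≤ Δ * Δ := by
        have hfib : badT.card = ∑ x ∈ T, (badT.filter fun e => e.1 = x).card :=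
          Finset.card_eq_sum_card_fiberwise (fun e he => (Finset.mem_filter.mp he).2)
        have hle1 : ∀ x, (badT.filter fun e => e.1 = x).card ≤ outDeg B x := by
          intro x
          apply Finset.card_le_card
          intro e he
          have h' := Finset.mem_filter.mp he
          exact Finset.mem_filter.mpr ⟨hA'B (Finset.mem_of_mem_filter _ h'.1), h'.2⟩
        have hsum1 : badT.card ≤ ∑ x ∈ T, outDeg B x := by
          rw [hfib]; exact Finset.sum_le_sum fun x _ => hle1 x
        have hsum2 : ∑ x ∈ T, outDeg B x + ∑ x ∈ T, (d' x - outDeg B x) = ∑ x ∈ T, d' x := by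
          rw [← Finset.sum_add_distrib]
          exact Finset.sum_congr rfl fun x _ => by have := h4 x; omega
        have hsum3 : ∑ x ∈ T, d' x ≤ Δ * Δ := by
          calc ∑ x ∈ T, d' x ≤ ∑ _x ∈ T, Δ := Finset.sum_le_sum fun x _ => hdΔ x
          _ = T.card * Δ := by rw [Finset.sum_const, smul_eq_mul]
          _ ≤ Δ * Δ := Nat.mul_le_mul_right Δ hTcard
        omega
      have hgood : ∃ e ∈ A', e ∉ badH ∪ badT := by
        by_contra hno
        push_neg at hno
        have hsub : A' ⊆ badH ∪ badT := fun e he => hno e he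
        have hcu : A'.card ≤ badH.card + badT.card :=
          le_trans (Finset.card_le_card hsub) (Finset.card_union_le _ _)
        have hpow : Δ ^ 2 = Δ * Δ := sq Δ
        omega
      obtain ⟨⟨x, y⟩, heA', hebad⟩ := hgood
      have heB : (x, y) ∈ B := hA'B heA'
      have hyH : y ∉ H := by
        intro hy
        exact hebad (Finset.mem_union_left _ (Finset.mem_filter.mpr ⟨heA', hy⟩))
      have hxT : x ∉ T := by
        intro hx
        exact hebad (Finset.mem_union_right _ (Finset.mem_filter.mpr ⟨heA', hx⟩))
      have hyu : y ≠ u := fun h => hyH (h ▸ Finset.mem_insert_self u _)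
      have hxv : x ≠ v := fun h => hxT (h ▸ Finset.mem_insert_self v _)
      have huyB : (u, y) ∉ B := by
        intro hB'
        exact hyH (Finset.mem_insert_of_mem
          (Finset.mem_image.mpr ⟨(u, y), Finset.mem_filter.mpr ⟨hB', rfl⟩, rfl⟩))
      have hxvB : (x, v) ∉ B := by
        intro hB'
        exact hxT (Finset.mem_insert_of_mem
          (Finset.mem_image.mpr ⟨(x, v), Finset.mem_filter.mpr ⟨hB', rfl⟩, rfl⟩))
      have hne12 : (u, y) ≠ (x, v) := by
        intro h
        rw [Prod.mk.injEq] at h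
        obtain ⟨h1', h2'⟩ := h
        refine huyB ?_
        rw [h1']
        exact heB
      set A2 : Finset (Fin n × Fin n) := insert (u, y) (insert (x, v) (A'.erase (x, y)))
        with hA2def
      have hxvA' : (x, v) ∉ A'.erase (x, y) :=
        fun h => hxvB (hA'B (Finset.mem_of_mem_erase h))
      have huyA' : (u, y) ∉ insert (x, v) (A'.erase (x, y)) := by
        intro h
        rcases Finset.mem_insert.mp h with h | h
        · exact hne12 h
        · exact huyB (hA'B (Finset.mem_of_mem_erase h))
      have hA2card : A2.card = A'.card + 1 := by
        rw [hA2def, Finset.card_insert_of_notMem huyA', Finset.card_insert_of_notMem hxvA',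
          Finset.card_erase_of_mem heA']
        have : 1 ≤ A'.card := Finset.card_pos.mpr ⟨(x, y), heA'⟩
        omega
      have hxA : (x, y) ∉ A := h1 _ heA'
      have hBA2 : A ∪ A2 = insert (u, y) (insert (x, v) (B.erase (x, y))) := by
        rw [hA2def, Finset.union_insert, Finset.union_insert, union_erase_eq A A' (x, y) hxA]
      have hnm2 : (x, v) ∉ B.erase (x, y) := fun h => hxvB (Finset.mem_of_mem_erase h)
      have hnm1 : (u, y) ∉ insert (x, v) (B.erase (x, y)) := by
        intro h
        rcases Finset.mem_insert.mp h with h | h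
        · exact hne12 h
        · exact huyB (Finset.mem_of_mem_erase h)
      refine key u v A2 ?_ ?_ hA2card ?_ ?_ hav hbu
      · intro a ha
        rw [hA2def] at ha
        rcases Finset.mem_insert.mp ha with rfl | ha
        · exact fun h => huyB (hAB h)
        rcases Finset.mem_insert.mp ha with rfl | ha
        · exact fun h => hxvB (hAB h)
        · exact h1 a (Finset.mem_of_mem_erase ha)
      · intro w hw
        rw [hA2def] at hw
        rcases Finset.mem_insert.mp hw with h | hw
        · rw [Prod.mk.injEq] at h
          exact hyu (h.2.symm.trans h.1)
        rcases Finset.mem_insert.mp hw with h | hw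
        · rw [Prod.mk.injEq] at h
          exact hxv (h.1.symm.trans h.2)
        · exact h2 w (Finset.mem_of_mem_erase hw)
      · intro w
        rw [hBA2, inDeg_insert' u y _ hnm1 w, inDeg_insert' x v _ hnm2 w]
        have h3' := inDeg_erase' x y B heB w
        omega
      · intro w
        rw [hBA2, outDeg_insert' u y _ hnm1 w, outDeg_insert' x v _ hnm2 w]
        have h3' := outDeg_erase' x y B heB w
        omega

/-- **Transfer of number-problem solutions to digraph solutions.** If there are
target degree pairs `(c' i, d' i) ∈ τ(v_i)` dominating the current degrees whose
total increase in each component is a common value `s' > 2(Δ*)²`, where all pairs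
in the lists `τ` are componentwise at most `Δ* ≤ n - 1`, and the target multiset
fulfills `Prp`, then there is a loopless arc set `A'` disjoint from `A` of size `s'`
realizing exactly these degrees; in particular all degree-list constraints and the
sequence property hold for `D + A'`. -/
theorem number_solution_transfer (n : ℕ) (A : Finset (Fin n × Fin n))
    (hA : ∀ v : Fin n, (v, v) ∉ A)
    (τ : Fin n → Set (ℕ × ℕ)) (Prp : Multiset (ℕ × ℕ) → Prop)
    (Δ : ℕ) (hΔn : Δ ≤ n - 1)
    (hτΔ : ∀ v : Fin n, ∀ p ∈ τ v, p.1 ≤ Δ ∧ p.2 ≤ Δ)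
    (c' d' : Fin n → ℕ) (s' : ℕ)
    (hs' : 2 * Δ ^ 2 < s')
    (hτ : ∀ i : Fin n, (c' i, d' i) ∈ τ i)
    (hc : ∀ i : Fin n, inDeg A i ≤ c' i)
    (hd : ∀ i : Fin n, outDeg A i ≤ d' i)
    (hsumc : ∑ i, (c' i - inDeg A i) = s')
    (hsumd : ∑ i, (d' i - outDeg A i) = s')
    (hPrp : Prp (Finset.univ.val.map fun i => (c' i, d' i))) :
    ∃ A' : Finset (Fin n × Fin n),
      (∀ a ∈ A', a ∉ A) ∧
      (∀ v : Fin n, (v, v) ∉ A') ∧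
      A'.card = s' ∧
      (∀ i : Fin n, deg (A ∪ A') i = (c' i, d' i)) ∧
      (∀ v : Fin n, deg (A ∪ A') v ∈ τ v) ∧
      Prp (degSeq (A ∪ A')) := by
  have hcΔ : ∀ v, c' v ≤ Δ := fun v => (hτΔ v _ (hτ v)).1
  have hdΔ : ∀ v, d' v ≤ Δ := fun v => (hτΔ v _ (hτ v)).2
  have hΔ1 : 1 ≤ Δ := by
    by_contra h
    have hc0 : ∀ i : Fin n, c' i - inDeg A i = 0 := fun i => by
      have := hcΔ i; have := hc i; omega
    have : s' = 0 := by
      rw [← hsumc]; exact Finset.sum_eq_zero fun i _ => hc0 i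
    omega
  have hAe : A ∪ (∅ : Finset (Fin n × Fin n)) = A := Finset.union_empty A
  obtain ⟨A'', g1, g2, g3, g4⟩ :=
    main_realize hΔ1 A c' d' hcΔ hdΔ s' ∅
      (fun a ha => absurd ha (Finset.notMem_empty a))
      (fun v => Finset.notMem_empty _)
      (by rw [hAe]; exact hc) (by rw [hAe]; exact hd)
      (by rw [hAe]; exact hsumc) (by rw [hAe]; exact hsumd)
      (by rw [Finset.card_empty]; omega)
  have hdeg : ∀ i : Fin n, deg (A ∪ A'') i = (c' i, d' i) := by
    intro i
    unfold deg
    rw [(g4 i).1, (g4 i).2]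
  refine ⟨A'', g1, g2, by rw [g3, Finset.card_empty, zero_add], hdeg,
    fun v => by rw [hdeg v]; exact hτ v, ?_⟩
  have hseq : degSeq (A ∪ A'') = Finset.univ.val.map fun i => (c' i, d' i) := by
    unfold degSeq
    exact Multiset.map_congr rfl fun i _ => hdeg i
  rw [hseq]
  exact hPrp
end

section
/- Let D = (V, A) be a digraph, let s be a nonnegative integer, let τ be a degree list function on V, let Π be a sequence property, and let C ⊆ V be a 2s(Δ_D + 1)-block-type set for (D, τ). If there exists a loopless arc set A' ⊆ (V × V) \ A with |A'| ≤ s such that σ(D + A') fulfills Π and deg_{D+A'}(v) ∈ τ(v) for all v ∈ V, then there exists a loopless arc set A* ⊆ (C × C) \ A with |A*| ≤ s such that σ(D + A*) fulfills Π and deg_{D+A*}(v) ∈ τ(v) for all v ∈ V. -/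
/-- Maximum in- or outdegree in the digraph with arc set `A`. -/
def maxDeg {V : Type*} [Fintype V] [DecidableEq V] (A : Finset (V × V)) : ℕ :=
  Finset.univ.sup fun v => max (inDeg A v) (outDeg A v)

/-- The satisfied vertices of degree `d` and type `t` with respect to the
degree list function `τ`:  vertices `v` with `deg v = d`, `deg v + t ∈ τ v`
and `deg v ∈ τ v`, i.e. `(B_D(d) ∩ T_{D,τ}(t)) \ U`. -/
def satDegType {V : Type*} [Fintype V] [DecidableEq V]
    (A : Finset (V × V)) (τ : V → Finset (ℕ × ℕ)) (d t : ℕ × ℕ) : Finset V :=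
  Finset.univ.filter fun v => deg A v = d ∧ deg A v + t ∈ τ v ∧ deg A v ∈ τ v

/-- `C` is an `α`-block-type set for `(D, τ)`:  it contains all unsatisfied
vertices and, for each degree `d` occurring in `σ(D)` and each type `t ≠ (0,0)`,
exactly `min |(B_D(d) ∩ T_{D,τ}(t)) \ U| α` satisfied vertices of degree `d`
and type `t`. -/
def IsBlockTypeSet {V : Type*} [Fintype V] [DecidableEq V]
    (A : Finset (V × V)) (τ : V → Finset (ℕ × ℕ)) (α : ℕ) (C : Finset V) : Prop :=
  (∀ v : V, deg A v ∉ τ v → v ∈ C) ∧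
  ∀ d t : ℕ × ℕ, (∃ v : V, deg A v = d) → t ≠ (0, 0) →
    (satDegType A τ d t ∩ C).card = min (satDegType A τ d t).card α


section Helpers

variable {V : Type*} [Fintype V] [DecidableEq V]

lemma inDeg_union (A A' : Finset (V × V)) (h : ∀ a ∈ A', a ∉ A) (x : V) :
    inDeg (A ∪ A') x = inDeg A x + inDeg A' x := by
  unfold inDeg
  rw [Finset.filter_union, Finset.card_union_of_disjoint]
  exact Finset.disjoint_left.mpr fun a ha hb =>
    h a (Finset.mem_filter.mp hb).1 (Finset.mem_filter.mp ha).1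

lemma outDeg_union (A A' : Finset (V × V)) (h : ∀ a ∈ A', a ∉ A) (x : V) :
    outDeg (A ∪ A') x = outDeg A x + outDeg A' x := by
  unfold outDeg
  rw [Finset.filter_union, Finset.card_union_of_disjoint]
  exact Finset.disjoint_left.mpr fun a ha hb =>
    h a (Finset.mem_filter.mp hb).1 (Finset.mem_filter.mp ha).1

lemma deg_union (A A' : Finset (V × V)) (h : ∀ a ∈ A', a ∉ A) (x : V) :
    deg (A ∪ A') x = deg A x + (inDeg A' x, outDeg A' x) := by
  unfold deg
  rw [inDeg_union A A' h, outDeg_union A A' h]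
  rfl

/-- The set of endpoints of arcs in `A'`. -/
def touchedSet (A' : Finset (V × V)) : Finset V :=
  A'.image Prod.fst ∪ A'.image Prod.snd

lemma mem_touched_fst {A' : Finset (V × V)} {a : V × V} (ha : a ∈ A') :
    a.1 ∈ touchedSet A' :=
  Finset.mem_union_left _ (Finset.mem_image_of_mem _ ha)

lemma mem_touched_snd {A' : Finset (V × V)} {a : V × V} (ha : a ∈ A') :
    a.2 ∈ touchedSet A' :=
  Finset.mem_union_right _ (Finset.mem_image_of_mem _ ha)

lemma inDeg_eq_zero_of_not_touched {A' : Finset (V × V)} {x : V}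
    (h : x ∉ touchedSet A') : inDeg A' x = 0 := by
  unfold inDeg
  rw [Finset.card_eq_zero, Finset.filter_eq_empty_iff]
  intro a ha hax
  exact h (hax ▸ mem_touched_snd ha)

lemma outDeg_eq_zero_of_not_touched {A' : Finset (V × V)} {x : V}
    (h : x ∉ touchedSet A') : outDeg A' x = 0 := by
  unfold outDeg
  rw [Finset.card_eq_zero, Finset.filter_eq_empty_iff]
  intro a ha hax
  exact h (hax ▸ mem_touched_fst ha)

lemma deg_nonzero_of_touched {A' : Finset (V × V)} {x : V}
    (h : x ∈ touchedSet A') : (inDeg A' x, outDeg A' x) ≠ (0, 0) := by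
  intro hcon
  have h1 : inDeg A' x = 0 := congrArg Prod.fst hcon
  have h2 : outDeg A' x = 0 := congrArg Prod.snd hcon
  rcases Finset.mem_union.mp h with h | h
  · obtain ⟨a, ha, hax⟩ := Finset.mem_image.mp h
    have hmem : a ∈ A'.filter fun b => b.1 = x := Finset.mem_filter.mpr ⟨ha, hax⟩
    have := Finset.card_pos.mpr ⟨a, hmem⟩
    unfold outDeg at h2; omega
  · obtain ⟨a, ha, hax⟩ := Finset.mem_image.mp h
    have hmem : a ∈ A'.filter fun b => b.2 = x := Finset.mem_filter.mpr ⟨ha, hax⟩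
    have := Finset.card_pos.mpr ⟨a, hmem⟩
    unfold inDeg at h1; omega

lemma touched_card_le (A' : Finset (V × V)) : (touchedSet A').card ≤ 2 * A'.card := by
  have h1 := Finset.card_image_le (s := A') (f := Prod.fst)
  have h2 := Finset.card_image_le (s := A') (f := Prod.snd)
  have := Finset.card_union_le (A'.image Prod.fst) (A'.image Prod.snd)
  unfold touchedSet
  omega

lemma inDeg_le_maxDeg (A : Finset (V × V)) (u : V) : inDeg A u ≤ maxDeg A := by
  have h := Finset.le_sup (f := fun v => max (inDeg A v) (outDeg A v)) (Finset.mem_univ u)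
  exact le_trans (le_max_left _ _) h

lemma outDeg_le_maxDeg (A : Finset (V × V)) (u : V) : outDeg A u ≤ maxDeg A := by
  have h := Finset.le_sup (f := fun v => max (inDeg A v) (outDeg A v)) (Finset.mem_univ u)
  exact le_trans (le_max_right _ _) h

/-- The swap step: replace the vertex `v` by `w` in every arc of `A'`. -/
lemma swap_lemma (A : Finset (V × V)) (A' : Finset (V × V))
    (hd : ∀ a ∈ A', a ∉ A) (hl : ∀ x : V, (x, x) ∉ A')
    (v w : V) (hvw : v ≠ w) (hwt : w ∉ touchedSet A')
    (hc1 : ∀ u, (v, u) ∈ A' → (w, u) ∉ A)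
    (hc2 : ∀ u, (u, v) ∈ A' → (u, w) ∉ A) :
    ∃ B : Finset (V × V),
      (∀ a ∈ B, a ∉ A) ∧ (∀ x : V, (x, x) ∉ B) ∧ B.card = A'.card ∧
      inDeg B v = 0 ∧ outDeg B v = 0 ∧
      inDeg B w = inDeg A' v ∧ outDeg B w = outDeg A' v ∧
      (∀ x, x ≠ v → x ≠ w → inDeg B x = inDeg A' x ∧ outDeg B x = outDeg A' x) ∧
      touchedSet B ⊆ insert w ((touchedSet A').erase v) := by
  classical
  set f : V × V → V × V :=
    fun a => (if a.1 = v then w else a.1, if a.2 = v then w else a.2) with hf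
  set g : V × V → V × V :=
    fun a => (if a.1 = w then v else a.1, if a.2 = w then v else a.2) with hg
  have hne1 : ∀ a ∈ A', a.1 ≠ w := fun a ha h => hwt (h ▸ mem_touched_fst ha)
  have hne2 : ∀ a ∈ A', a.2 ≠ w := fun a ha h => hwt (h ▸ mem_touched_snd ha)
  have hgf : ∀ a ∈ A', g (f a) = a := by
    intro a ha
    simp only [hf, hg]
    have e1 : a.1 ≠ w := hne1 a ha
    have e2 : a.2 ≠ w := hne2 a ha
    ext
    · dsimp
      by_cases h1 : a.1 = v <;> simp [h1, e1]
    · dsimp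
      by_cases h2 : a.2 = v <;> simp [h2, e2]
  have hinj : Set.InjOn f A' := by
    intro a ha b hb hab
    rw [← hgf a ha, ← hgf b hb, hab]
  refine ⟨A'.image f, ?_, ?_, Finset.card_image_of_injOn hinj, ?_, ?_, ?_, ?_, ?_, ?_⟩
  · -- disjoint from A
    intro b hb
    obtain ⟨a, ha, rfl⟩ := Finset.mem_image.mp hb
    simp only [hf]
    by_cases h1 : a.1 = v <;> by_cases h2 : a.2 = v
    · exfalso; exact hl v ((Prod.ext h1 h2 : a = (v, v)) ▸ ha)
    · simp only [h1, h2, if_true, if_neg]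
      exact hc1 a.2 ((Prod.ext h1 rfl : a = (v, a.2)) ▸ ha)
    · simp only [h1, h2, if_true, if_neg]
      exact hc2 a.1 ((Prod.ext rfl h2 : a = (a.1, v)) ▸ ha)
    · simp only [h1, h2, if_neg, Prod.mk.eta]
      exact hd a ha
  · -- loopless
    intro x hx
    obtain ⟨a, ha, hax⟩ := Finset.mem_image.mp hx
    simp only [hf, Prod.mk.injEq] at hax
    obtain ⟨e1, e2⟩ := hax
    by_cases h1 : a.1 = v <;> by_cases h2 : a.2 = v <;> simp [h1, h2] at e1 e2
    · exact hl v ((Prod.ext h1 h2 : a = (v, v)) ▸ ha)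
    · exact hne2 a ha (by rw [e2, ← e1])
    · exact hne1 a ha (by rw [e1, ← e2])
    · exact hl x ((Prod.ext e1 e2 : a = (x, x)) ▸ ha)
  · -- inDeg at v is 0
    unfold inDeg
    rw [Finset.card_eq_zero, Finset.filter_eq_empty_iff]
    intro b hb
    obtain ⟨a, ha, rfl⟩ := Finset.mem_image.mp hb
    simp only [hf]
    split_ifs with h
    · exact hvw.symm
    · exact h
  · -- outDeg at v is 0
    unfold outDeg
    rw [Finset.card_eq_zero, Finset.filter_eq_empty_iff]
    intro b hb
    obtain ⟨a, ha, rfl⟩ := Finset.mem_image.mp hb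
    simp only [hf]
    split_ifs with h
    · exact hvw.symm
    · exact h
  · -- inDeg at w equals inDeg A' v
    unfold inDeg
    rw [Finset.filter_image, Finset.card_image_of_injOn (hinj.mono (Finset.filter_subset _ _))]
    congr 1
    apply Finset.filter_congr
    intro a ha
    simp only [hf]
    constructor
    · intro h
      split_ifs at h with h1
      · exact h1
      · exact absurd h (hne2 a ha)
    · intro h
      rw [if_pos h]
  · -- outDeg at w equals outDeg A' v
    unfold outDeg
    rw [Finset.filter_image, Finset.card_image_of_injOn (hinj.mono (Finset.filter_subset _ _))]
    congr 1
    apply Finset.filter_congr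
    intro a ha
    simp only [hf]
    constructor
    · intro h
      split_ifs at h with h1
      · exact h1
      · exact absurd h (hne1 a ha)
    · intro h
      rw [if_pos h]
  · -- degrees elsewhere unchanged
    intro x hxv hxw
    constructor
    · unfold inDeg
      rw [Finset.filter_image, Finset.card_image_of_injOn (hinj.mono (Finset.filter_subset _ _))]
      congr 1
      apply Finset.filter_congr
      intro a ha
      simp only [hf]
      constructor
      · intro h
        split_ifs at h with h1
        · exact absurd h.symm hxw
        · exact h
      · intro h
        rw [if_neg (h ▸ hxv)]
        exact h
    · unfold outDeg
      rw [Finset.filter_image, Finset.card_image_of_injOn (hinj.mono (Finset.filter_subset _ _))]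
      congr 1
      apply Finset.filter_congr
      intro a ha
      simp only [hf]
      constructor
      · intro h
        split_ifs at h with h1
        · exact absurd h.symm hxw
        · exact h
      · intro h
        rw [if_neg (h ▸ hxv)]
        exact h
  · -- touched set of the new arc set
    intro x hx
    rcases Finset.mem_union.mp hx with h | h <;>
      obtain ⟨b, hb, hbx⟩ := Finset.mem_image.mp h <;>
      obtain ⟨a, ha, rfl⟩ := Finset.mem_image.mp hb <;>
      simp only [hf] at hbx
    · split_ifs at hbx with h1
      · exact hbx ▸ Finset.mem_insert_self w _
      · exact Finset.mem_insert_of_mem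
          (Finset.mem_erase.mpr ⟨hbx ▸ h1, hbx ▸ mem_touched_fst ha⟩)
    · split_ifs at hbx with h1
      · exact hbx ▸ Finset.mem_insert_self w _
      · exact Finset.mem_insert_of_mem
          (Finset.mem_erase.mpr ⟨hbx ▸ h1, hbx ▸ mem_touched_snd ha⟩)

end Helpers

/-- **Solutions inside a `2s(Δ_D+1)`-block-type set.** If a `DDConSeqC` instance
has a solution, then it has one all of whose arcs lie inside
a given `2s(Δ_D+1)`-block-type set `C`. -/
theorem solution_in_block_type_set {V : Type*} [Fintype V] [DecidableEq V]
    (A : Finset (V × V)) (hA : ∀ v : V, (v, v) ∉ A)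
    (s : ℕ) (τ : V → Finset (ℕ × ℕ)) (Prp : Multiset (ℕ × ℕ) → Prop)
    (C : Finset V)
    (hC : IsBlockTypeSet A τ (2 * s * (maxDeg A + 1)) C)
    (hex : ∃ A' : Finset (V × V),
      (∀ a ∈ A', a ∉ A) ∧ (∀ v : V, (v, v) ∉ A') ∧ A'.card ≤ s ∧
      Prp (degSeq (A ∪ A')) ∧ (∀ v : V, deg (A ∪ A') v ∈ τ v)) :
    ∃ A'' : Finset (V × V),
      A'' ⊆ C ×ˢ C ∧
      (∀ a ∈ A'', a ∉ A) ∧ (∀ v : V, (v, v) ∉ A'') ∧ A''.card ≤ s ∧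
      Prp (degSeq (A ∪ A'')) ∧ (∀ v : V, deg (A ∪ A'') v ∈ τ v) := by
  classical
  obtain ⟨A', h1, h2, h3, h4, h5⟩ := hex
  suffices H : ∀ n (A' : Finset (V × V)), ((touchedSet A') \ C).card ≤ n →
      (∀ a ∈ A', a ∉ A) → (∀ x : V, (x, x) ∉ A') → A'.card ≤ s →
      (∀ x : V, deg (A ∪ A') x ∈ τ x) →
      ∃ B : Finset (V × V), B ⊆ C ×ˢ C ∧ (∀ a ∈ B, a ∉ A) ∧
        (∀ x : V, (x, x) ∉ B) ∧ B.card ≤ s ∧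
        degSeq (A ∪ B) = degSeq (A ∪ A') ∧ (∀ x : V, deg (A ∪ B) x ∈ τ x) by
    obtain ⟨B, hsub, ha, hb, hc, hdq, he⟩ := H _ A' le_rfl h1 h2 h3 h5
    exact ⟨B, hsub, ha, hb, hc, hdq ▸ h4, he⟩
  intro n
  induction n with
  | zero =>
    intro A' hm hd hl hcard hτ
    refine ⟨A', ?_, hd, hl, hcard, rfl, hτ⟩
    have hempty : touchedSet A' \ C = ∅ := Finset.card_eq_zero.mp (Nat.le_zero.mp hm)
    have hTC : touchedSet A' ⊆ C := by
      intro x hx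
      by_contra hxc
      exact absurd (Finset.mem_sdiff.mpr ⟨hx, hxc⟩) (by simp [hempty])
    intro a ha
    exact Finset.mem_product.mpr ⟨hTC (mem_touched_fst ha), hTC (mem_touched_snd ha)⟩
  | succ n ih =>
    intro A' hm hd hl hcard hτ
    by_cases hne : (touchedSet A' \ C).Nonempty
    swap
    · -- all endpoints inside C already
      refine ⟨A', ?_, hd, hl, hcard, rfl, hτ⟩
      have hTC : touchedSet A' ⊆ C := by
        intro x hx
        by_contra hxc
        exact hne ⟨x, Finset.mem_sdiff.mpr ⟨hx, hxc⟩⟩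
      intro a ha
      exact Finset.mem_product.mpr ⟨hTC (mem_touched_fst ha), hTC (mem_touched_snd ha)⟩
    obtain ⟨v, hv⟩ := hne
    obtain ⟨hvt, hvC⟩ := Finset.mem_sdiff.mp hv
    set t : ℕ × ℕ := (inDeg A' v, outDeg A' v) with ht
    set d : ℕ × ℕ := deg A v with hdv
    set S : Finset V := satDegType A τ d t with hS
    set α : ℕ := 2 * s * (maxDeg A + 1) with hα
    have hdegu : ∀ x, deg (A ∪ A') x = deg A x + (inDeg A' x, outDeg A' x) :=
      deg_union A A' hd
    have ht0 : t ≠ (0, 0) := deg_nonzero_of_touched hvt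
    have hvsat : deg A v ∈ τ v := by
      by_contra h
      exact hvC (hC.1 v h)
    have hvS : v ∈ S := by
      rw [hS]
      unfold satDegType
      refine Finset.mem_filter.mpr ⟨Finset.mem_univ v, rfl, ?_, hvsat⟩
      rw [← hdegu v]
      exact hτ v
    have hSC : (S ∩ C).card = min S.card α := hC.2 d t ⟨v, rfl⟩ ht0
    have hSClt : (S ∩ C).card < S.card := by
      apply Finset.card_lt_card
      constructor
      · exact Finset.inter_subset_left
      · intro hsub
        exact hvC (Finset.mem_inter.mp (hsub hvS)).2
    have hSCα : (S ∩ C).card = α := by omega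
    -- the set of "bad" candidates
    set Bad : Finset V := (touchedSet A').erase v ∪
      A'.biUnion (fun a => (A.filter fun b => b.2 = a.2).image Prod.fst ∪
        (A.filter fun b => b.1 = a.1).image Prod.snd) with hBad
    have hA'ne : A'.Nonempty := by
      rcases Finset.mem_union.mp hvt with h | h <;>
        · obtain ⟨a, ha, _⟩ := Finset.mem_image.mp h
          exact ⟨a, ha⟩
    have hA'pos : 1 ≤ A'.card := Finset.card_pos.mpr hA'ne
    have hbadcard : Bad.card < α := by
      have he1 : ((touchedSet A').erase v).card + 1 = (touchedSet A').card :=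
        Finset.card_erase_add_one hvt
      have he2 := touched_card_le A'
      have hb1 : (A'.biUnion (fun a => (A.filter fun b => b.2 = a.2).image Prod.fst ∪
          (A.filter fun b => b.1 = a.1).image Prod.snd)).card ≤ s * (2 * maxDeg A) := by
        calc (A'.biUnion (fun a => (A.filter fun b => b.2 = a.2).image Prod.fst ∪
              (A.filter fun b => b.1 = a.1).image Prod.snd)).card
            ≤ ∑ a ∈ A', ((A.filter fun b => b.2 = a.2).image Prod.fst ∪
              (A.filter fun b => b.1 = a.1).image Prod.snd).card :=
              Finset.card_biUnion_le
          _ ≤ ∑ _a ∈ A', 2 * maxDeg A := by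
              apply Finset.sum_le_sum
              intro a _
              have u1 := Finset.card_union_le ((A.filter fun b => b.2 = a.2).image Prod.fst)
                ((A.filter fun b => b.1 = a.1).image Prod.snd)
              have u2 := Finset.card_image_le (s := A.filter fun b => b.2 = a.2)
                (f := Prod.fst)
              have u3 := Finset.card_image_le (s := A.filter fun b => b.1 = a.1)
                (f := Prod.snd)
              have u4 : inDeg A a.2 ≤ maxDeg A := inDeg_le_maxDeg A a.2
              have u5 : outDeg A a.1 ≤ maxDeg A := outDeg_le_maxDeg A a.1
              unfold inDeg at u4
              unfold outDeg at u5
              omega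
          _ = A'.card * (2 * maxDeg A) := by
              rw [Finset.sum_const, smul_eq_mul]
          _ ≤ s * (2 * maxDeg A) := Nat.mul_le_mul_right _ hcard
      have hbu := Finset.card_union_le ((touchedSet A').erase v)
        (A'.biUnion (fun a => (A.filter fun b => b.2 = a.2).image Prod.fst ∪
          (A.filter fun b => b.1 = a.1).image Prod.snd))
      have hαeq : α = 2 * s + s * (2 * maxDeg A) := by rw [hα]; ring
      rw [hBad]
      omega
    -- find the replacement vertex w
    have hwex : ((S ∩ C) \ Bad).Nonempty := by
      rw [← Finset.card_pos]
      have := Finset.card_le_card_sdiff_add_card (s := S ∩ C) (t := Bad)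
      omega
    obtain ⟨w, hw⟩ := hwex
    obtain ⟨hwSC, hwBad⟩ := Finset.mem_sdiff.mp hw
    obtain ⟨hwS, hwC⟩ := Finset.mem_inter.mp hwSC
    have hwS' := Finset.mem_filter.mp hwS
    have hwdeg : deg A w = d := hwS'.2.1
    have hwτ : deg A w + t ∈ τ w := hwS'.2.2.1
    have hvw : v ≠ w := fun h => hvC (h ▸ hwC)
    have hwnt : w ∉ touchedSet A' := by
      intro h
      exact hwBad (Finset.mem_union_left _ (Finset.mem_erase.mpr ⟨fun h' => hvw h'.symm, h⟩))
    have hc1 : ∀ u, (v, u) ∈ A' → (w, u) ∉ A := by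
      intro u hu hwu
      apply hwBad
      apply Finset.mem_union_right
      apply Finset.mem_biUnion.mpr
      exact ⟨(v, u), hu, Finset.mem_union_left _
        (Finset.mem_image.mpr ⟨(w, u), Finset.mem_filter.mpr ⟨hwu, rfl⟩, rfl⟩)⟩
    have hc2 : ∀ u, (u, v) ∈ A' → (u, w) ∉ A := by
      intro u hu huw
      apply hwBad
      apply Finset.mem_union_right
      apply Finset.mem_biUnion.mpr
      exact ⟨(u, v), hu, Finset.mem_union_right _
        (Finset.mem_image.mpr ⟨(u, w), Finset.mem_filter.mpr ⟨huw, rfl⟩, rfl⟩)⟩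
    obtain ⟨B, hdB, hlB, hcardB, hiv, hov, hiw, how, hoth, htouch⟩ :=
      swap_lemma A A' hd hl v w hvw hwnt hc1 hc2
    have hdeguB : ∀ x, deg (A ∪ B) x = deg A x + (inDeg B x, outDeg B x) :=
      deg_union A B hdB
    -- pointwise degrees after the swap
    have hdegswap : ∀ x, deg (A ∪ B) x = deg (A ∪ A') (Equiv.swap v w x) := by
      intro x
      by_cases hxv : x = v
      · subst hxv
        rw [Equiv.swap_apply_left, hdeguB x, hiv, hov, hdegu w,
          inDeg_eq_zero_of_not_touched hwnt, outDeg_eq_zero_of_not_touched hwnt]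
        have hxw : deg A x = deg A w := by rw [hwdeg, ← hdv]
        rw [hxw]
      · by_cases hxw : x = w
        · subst hxw
          rw [Equiv.swap_apply_right, hdeguB x, hiw, how, hdegu v]
          have hxv2 : deg A x = deg A v := by rw [← hdv, ← hwdeg]
          rw [hxv2]
        · rw [Equiv.swap_apply_of_ne_of_ne hxv hxw, hdeguB x, hdegu x,
            (hoth x hxv hxw).1, (hoth x hxv hxw).2]
    have hdseq : degSeq (A ∪ B) = degSeq (A ∪ A') := by
      unfold degSeq
      calc Finset.univ.val.map (deg (A ∪ B))
          = Finset.univ.val.map (fun x => deg (A ∪ A') (Equiv.swap v w x)) :=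
            Multiset.map_congr rfl (fun x _ => hdegswap x)
        _ = (Finset.univ.val.map (Equiv.swap v w)).map (deg (A ∪ A')) := by
            rw [Multiset.map_map]; rfl
        _ = Finset.univ.val.map (deg (A ∪ A')) := by
            have huniv : (Finset.univ.map (Equiv.swap v w).toEmbedding).val
                = Finset.univ.val := congrArg Finset.val (Finset.map_univ_equiv _)
            rw [Finset.map_val] at huniv
            simp only [Equiv.coe_toEmbedding] at huniv
            rw [huniv]
    have hτB : ∀ x, deg (A ∪ B) x ∈ τ x := by
      intro x
      by_cases hxv : x = v
      · subst hxv
        rw [hdeguB x, hiv, hov]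
        have hzero : deg A x + ((0 : ℕ), (0 : ℕ)) = deg A x := by
          ext <;> simp
        rw [hzero]
        exact hvsat
      · by_cases hxw : x = w
        · subst hxw
          rw [hdeguB x, hiw, how]
          exact hwτ
        · rw [hdeguB x, (hoth x hxv hxw).1, (hoth x hxv hxw).2, ← hdegu x]
          exact hτ x
    -- the measure decreases
    have hmeas : (touchedSet B \ C).card ≤ n := by
      have hsub : touchedSet B \ C ⊆ (touchedSet A' \ C).erase v := by
        intro x hx
        obtain ⟨hx1, hx2⟩ := Finset.mem_sdiff.mp hx
        have hx3 := htouch hx1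
        rcases Finset.mem_insert.mp hx3 with h | h
        · exact absurd (h ▸ hwC) hx2
        · obtain ⟨hxv, hxt⟩ := Finset.mem_erase.mp h
          exact Finset.mem_erase.mpr ⟨hxv, Finset.mem_sdiff.mpr ⟨hxt, hx2⟩⟩
      have c1 := Finset.card_le_card hsub
      have c2 := Finset.card_erase_add_one hv
      omega
    obtain ⟨B', hsub3, ha3, hb3, hc3, hdq3, he3⟩ :=
      ih B hmeas hdB hlB (hcardB ▸ hcard) hτB
    exact ⟨B', hsub3, ha3, hb3, hc3, hdq3.trans hdseq, he3⟩
end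

section
/- Let a_1, ..., a_n be positive integers with a_i < B for all i and Σ_{i=1}^n a_i = 2B. Consider the sequence σ of 5n nonnegative integer pairs consisting, for each i ∈ {1, ..., n}, of one pair (2B(i+1) − a_i, 0), two pairs (2B(i+1), 0), and two pairs (2B(i+1) − a_i, a_i). Then the following are equivalent: (1) there exists an index set I ⊆ {1, ..., n} with Σ_{i∈I} a_i = B; (2) there exists a sequence σ' of 5n pairs, indexed compatibly with σ, such that each pair of σ' componentwise dominates the corresponding pair of σ, the total increase over all first components equals B, the total increase over all second components equals B, and every pair occurring in the multiset σ' occurs at least 2 times. -/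
/-- The sequence of `5n` pairs constructed from a Partition instance
`a : Fin n → ℕ` with target `B`:  for each `i` (representing `a_{i+1}`,
hence with multiplier `2B(i+2)`), one pair `(2B(i+2) - a i, 0)` (at `j = 0`),
two pairs `(2B(i+2), 0)` (at `j = 1, 2`), and two pairs
`(2B(i+2) - a i, a i)` (at `j = 3, 4`). -/
def partitionSeq (n B : ℕ) (a : Fin n → ℕ) (p : Fin n × Fin 5) : ℕ × ℕ :=
  if p.2.val = 0 then (2 * B * (p.1.val + 2) - a p.1, 0)
  else if p.2.val = 1 ∨ p.2.val = 2 then (2 * B * (p.1.val + 2), 0)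
  else (2 * B * (p.1.val + 2) - a p.1, a p.1)

/-- **Correctness of the reduction from Partition to NumberDDA with `k = 2`.** -/
theorem partition_reduction (n B : ℕ) (a : Fin n → ℕ)
    (hpos : ∀ i, 0 < a i) (hlt : ∀ i, a i < B) (hsum : ∑ i, a i = 2 * B) :
    (∃ I : Finset (Fin n), ∑ i ∈ I, a i = B) ↔
    (∃ σ' : Fin n × Fin 5 → ℕ × ℕ,
      (∀ p : Fin n × Fin 5,
        (partitionSeq n B a p).1 ≤ (σ' p).1 ∧ (partitionSeq n B a p).2 ≤ (σ' p).2) ∧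
      (∑ p : Fin n × Fin 5, ((σ' p).1 - (partitionSeq n B a p).1)) = B ∧
      (∑ p : Fin n × Fin 5, ((σ' p).2 - (partitionSeq n B a p).2)) = B ∧
      (∀ p : Fin n × Fin 5,
        2 ≤ (Finset.univ.filter fun q : Fin n × Fin 5 => σ' q = σ' p).card)) := by
  have hv0 : ((0:Fin 5)).val = 0 := rfl
  have hv1 : ((1:Fin 5)).val = 1 := rfl
  have hv2 : ((2:Fin 5)).val = 2 := rfl
  have hv3 : ((3:Fin 5)).val = 3 := rfl
  have hv4 : ((4:Fin 5)).val = 4 := rfl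
  rcases Nat.eq_zero_or_pos n with hn | hn
  · subst hn
    have hB : B = 0 := by
      have h0 : (0:ℕ) = 2 * B := by simpa using hsum.symm
      omega
    constructor
    · rintro -
      refine ⟨fun p => p.1.elim0, fun p => p.1.elim0, ?_, ?_, fun p => p.1.elim0⟩ <;>
        simp [hB]
    · rintro -
      exact ⟨∅, by simp [hB]⟩
  have hBpos : 0 < B := (hpos ⟨0, hn⟩).trans (hlt ⟨0, hn⟩)
  have haM : ∀ i : Fin n, a i ≤ 2 * B * (i.val + 2) := by
    intro i
    have h2 : 2 * B * 1 ≤ 2 * B * (i.val + 2) := Nat.mul_le_mul_left _ (by omega)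
    have h3 := hlt i
    omega
  constructor
  · -- forward direction
    rintro ⟨I, hI⟩
    refine ⟨fun p => if p.2.val = 0 then
        (if p.1 ∈ I then (2 * B * (p.1.val + 2) - a p.1, a p.1)
          else (2 * B * (p.1.val + 2), 0))
        else partitionSeq n B a p, ?_, ?_, ?_, ?_⟩
    · intro p
      by_cases h0 : p.2.val = 0
      · by_cases hpI : p.1 ∈ I <;> simp [partitionSeq, h0, hpI, Nat.sub_le]
      · simp [h0]
    · rw [Fintype.sum_prod_type]
      have hrow : ∀ i : Fin n,
          (∑ j : Fin 5, (((if (i, j).2.val = 0 then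
              (if (i, j).1 ∈ I then (2 * B * ((i, j).1.val + 2) - a (i, j).1, a (i, j).1)
                else (2 * B * ((i, j).1.val + 2), 0))
              else partitionSeq n B a (i, j)) : ℕ × ℕ).1 - (partitionSeq n B a (i, j)).1))
            = if i ∈ I then 0 else a i := by
        intro i
        rw [Fin.sum_univ_five]
        by_cases hpI : i ∈ I <;>
          simp [partitionSeq, hpI, hv0, hv1, hv2, hv3, hv4, Nat.sub_sub_self (haM i)]
      rw [Finset.sum_congr rfl (fun i _ => hrow i)]
      have h1 : ∑ i, ((if i ∈ I then 0 else a i) + (if i ∈ I then a i else 0)) = ∑ i, a i := by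
        apply Finset.sum_congr rfl; intro i _; by_cases h : i ∈ I <;> simp [h]
      rw [Finset.sum_add_distrib] at h1
      have h2 : ∑ i, (if i ∈ I then a i else 0) = B := by
        rw [Finset.sum_ite_mem, Finset.univ_inter, hI]
      omega
    · rw [Fintype.sum_prod_type]
      have hrow : ∀ i : Fin n,
          (∑ j : Fin 5, (((if (i, j).2.val = 0 then
              (if (i, j).1 ∈ I then (2 * B * ((i, j).1.val + 2) - a (i, j).1, a (i, j).1)
                else (2 * B * ((i, j).1.val + 2), 0))
              else partitionSeq n B a (i, j)) : ℕ × ℕ).2 - (partitionSeq n B a (i, j)).2))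
            = if i ∈ I then a i else 0 := by
        intro i
        rw [Fin.sum_univ_five]
        by_cases hpI : i ∈ I <;> simp [partitionSeq, hpI, hv0, hv1, hv2, hv3, hv4]
      rw [Finset.sum_congr rfl (fun i _ => hrow i), Finset.sum_ite_mem, Finset.univ_inter, hI]
    · rintro ⟨i, j⟩
      have hex : ∃ q : Fin n × Fin 5, q ≠ (i, j) ∧
          (fun p : Fin n × Fin 5 => if p.2.val = 0 then
            (if p.1 ∈ I then (2 * B * (p.1.val + 2) - a p.1, a p.1)
              else (2 * B * (p.1.val + 2), 0))
            else partitionSeq n B a p) q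
          = (fun p : Fin n × Fin 5 => if p.2.val = 0 then
            (if p.1 ∈ I then (2 * B * (p.1.val + 2) - a p.1, a p.1)
              else (2 * B * (p.1.val + 2), 0))
            else partitionSeq n B a p) (i, j) := by
        by_cases hpI : i ∈ I
        · fin_cases j
          · exact ⟨(i, 3), by simp [Prod.ext_iff],
              by simp [partitionSeq, hpI, hv0, hv1, hv2, hv3, hv4]⟩
          · exact ⟨(i, 2), by simp [Prod.ext_iff],
              by simp [partitionSeq, hpI, hv0, hv1, hv2, hv3, hv4]⟩
          · exact ⟨(i, 1), by simp [Prod.ext_iff],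
              by simp [partitionSeq, hpI, hv0, hv1, hv2, hv3, hv4]⟩
          · exact ⟨(i, 4), by simp [Prod.ext_iff],
              by simp [partitionSeq, hpI, hv0, hv1, hv2, hv3, hv4]⟩
          · exact ⟨(i, 3), by simp [Prod.ext_iff],
              by simp [partitionSeq, hpI, hv0, hv1, hv2, hv3, hv4]⟩
        · fin_cases j
          · exact ⟨(i, 1), by simp [Prod.ext_iff],
              by simp [partitionSeq, hpI, hv0, hv1, hv2, hv3, hv4]⟩
          · exact ⟨(i, 2), by simp [Prod.ext_iff],
              by simp [partitionSeq, hpI, hv0, hv1, hv2, hv3, hv4]⟩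
          · exact ⟨(i, 1), by simp [Prod.ext_iff],
              by simp [partitionSeq, hpI, hv0, hv1, hv2, hv3, hv4]⟩
          · exact ⟨(i, 4), by simp [Prod.ext_iff],
              by simp [partitionSeq, hpI, hv0, hv1, hv2, hv3, hv4]⟩
          · exact ⟨(i, 3), by simp [Prod.ext_iff],
              by simp [partitionSeq, hpI, hv0, hv1, hv2, hv3, hv4]⟩
      obtain ⟨q, hqne, hqv⟩ := hex
      refine Finset.one_lt_card.mpr ⟨q, ?_, (i, j), ?_, hqne⟩
      · simpa using hqv
      · simp
  · -- backward direction
    rintro ⟨σ', hdom, h1, h2, hanon⟩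
    set d1 : Fin n × Fin 5 → ℕ := fun p => (σ' p).1 - (partitionSeq n B a p).1 with hd1def
    set d2 : Fin n × Fin 5 → ℕ := fun p => (σ' p).2 - (partitionSeq n B a p).2 with hd2def
    have hσ1 : ∀ p, (σ' p).1 = (partitionSeq n B a p).1 + d1 p := by
      intro p
      have := (hdom p).1
      simp only [hd1def]
      omega
    have hσ2 : ∀ p, (σ' p).2 = (partitionSeq n B a p).2 + d2 p := by
      intro p
      have := (hdom p).2
      simp only [hd2def]
      omega
    have hd1B : ∀ p, d1 p ≤ B := by
      intro p
      calc d1 p ≤ ∑ q, d1 q :=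
            Finset.single_le_sum (fun q _ => Nat.zero_le _) (Finset.mem_univ p)
        _ = B := h1
    have hub : ∀ p : Fin n × Fin 5, (partitionSeq n B a p).1 ≤ 2 * B * (p.1.val + 2) := by
      intro p
      unfold partitionSeq
      split_ifs <;> simp [Nat.sub_le]
    have hlb : ∀ p : Fin n × Fin 5, 2 * B * (p.1.val + 2) ≤ (partitionSeq n B a p).1 + a p.1 := by
      intro p
      have := haM p.1
      unfold partitionSeq
      split_ifs <;> simp <;> omega
    have hsep : ∀ p q : Fin n × Fin 5, p.1.val < q.1.val → (σ' p).1 < (σ' q).1 := by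
      intro p q h
      have e3 : 2 * B * (p.1.val + 3) ≤ 2 * B * (q.1.val + 2) :=
        Nat.mul_le_mul_left _ (by omega)
      have e4 : 2 * B * (p.1.val + 3) = 2 * B * (p.1.val + 2) + 2 * B := by ring
      have e5 := hub p
      have e6 := hlb q
      have e7 := hσ1 p
      have e8 := hd1B p
      have e9 := (hdom q).1
      have e10 := hlt q.1
      omega
    have hkey : ∀ i : Fin n, a i ≤ d1 (i, 0) ∨ a i ≤ d2 (i, 0) := by
      intro i
      obtain ⟨q, hqmem, hqne⟩ :=
        Finset.exists_mem_ne (hanon (i, (0:Fin 5))) (i, 0)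
      have hqv : σ' q = σ' (i, (0:Fin 5)) := (Finset.mem_filter.mp hqmem).2
      obtain ⟨q1, q2⟩ := q
      have hq1 : q1 = i := by
        by_contra hne
        have hne' : q1.val ≠ i.val := fun h => hne (Fin.ext h)
        rcases lt_or_gt_of_ne hne' with h | h
        · exact absurd (congrArg Prod.fst hqv) (Nat.ne_of_lt (hsep (q1, q2) (i, 0) h))
        · exact absurd (congrArg Prod.fst hqv) (Nat.ne_of_gt (hsep (i, (0:Fin 5)) (q1, q2) h))
      subst hq1
      have hp0 : partitionSeq n B a (q1, (0:Fin 5)) = (2 * B * (q1.val + 2) - a q1, 0) := by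
        simp [partitionSeq, hv0]
      have hMa := haM q1
      have hq5 := q2.isLt
      have e1 := congrArg Prod.fst hqv
      have e2 := congrArg Prod.snd hqv
      rw [hσ1 (q1, q2), hσ1, hp0] at e1
      rw [hσ2 (q1, q2), hσ2, hp0] at e2
      rcases (by omega : q2.val = 0 ∨ q2.val = 1 ∨ q2.val = 2 ∨ q2.val = 3 ∨ q2.val = 4)
        with h | h | h | h | h
      · exact absurd (by rw [show q2 = 0 from Fin.ext h]) hqne
      · left; simp [partitionSeq, h] at e1; omega
      · left; simp [partitionSeq, h] at e1; omega
      · right; simp [partitionSeq, h] at e2; omega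
      · right; simp [partitionSeq, h] at e2; omega
    have hsum1 : ∑ i : Fin n, ∑ j : Fin 5, d1 (i, j) = B := by
      rw [← Fintype.sum_prod_type]; exact h1
    have hsum2 : ∑ i : Fin n, ∑ j : Fin 5, d2 (i, j) = B := by
      rw [← Fintype.sum_prod_type]; exact h2
    have hone1 : ∀ i : Fin n, d1 (i, 0) ≤ ∑ j : Fin 5, d1 (i, j) := fun i =>
      Finset.single_le_sum (f := fun j : Fin 5 => d1 (i, j))
        (fun j _ => Nat.zero_le _) (Finset.mem_univ (0 : Fin 5))
    have hone2 : ∀ i : Fin n, d2 (i, 0) ≤ ∑ j : Fin 5, d2 (i, j) := fun i =>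
      Finset.single_le_sum (f := fun j : Fin 5 => d2 (i, j))
        (fun j _ => Nat.zero_le _) (Finset.mem_univ (0 : Fin 5))
    have hac : ∀ i ∈ Finset.univ,
        a i ≤ (∑ j : Fin 5, d1 (i, j)) + ∑ j : Fin 5, d2 (i, j) := by
      intro i _
      rcases hkey i with h | h
      · have := hone1 i; omega
      · have := hone2 i; omega
    have htot : ∑ i : Fin n, ((∑ j : Fin 5, d1 (i, j)) + ∑ j : Fin 5, d2 (i, j)) = 2 * B := by
      rw [Finset.sum_add_distrib, hsum1, hsum2]; ring
    have heq : ∀ i ∈ Finset.univ,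
        a i = (∑ j : Fin 5, d1 (i, j)) + ∑ j : Fin 5, d2 (i, j) :=
      (Finset.sum_eq_sum_iff_of_le hac).mp (by rw [hsum, htot])
    have hd : ∀ i : Fin n,
        (∑ j : Fin 5, d2 (i, j)) = 0 ∨ (∑ j : Fin 5, d2 (i, j)) = a i := by
      intro i
      have hci := heq i (Finset.mem_univ i)
      have h0 := hone1 i
      have h0' := hone2 i
      rcases hkey i with h | h
      · left; omega
      · right; omega
    refine ⟨Finset.univ.filter (fun i => (∑ j : Fin 5, d2 (i, j)) = a i), ?_⟩
    have hcong : ∑ i ∈ Finset.univ.filter (fun i => (∑ j : Fin 5, d2 (i, j)) = a i), a i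
        = ∑ i ∈ Finset.univ.filter (fun i => (∑ j : Fin 5, d2 (i, j)) = a i),
            (∑ j : Fin 5, d2 (i, j)) :=
      Finset.sum_congr rfl (fun i hi => ((Finset.mem_filter.mp hi).2).symm)
    have hsplit := Finset.sum_filter_add_sum_filter_not Finset.univ
      (fun i => (∑ j : Fin 5, d2 (i, j)) = a i) (fun i => ∑ j : Fin 5, d2 (i, j))
    have hz : ∑ i ∈ Finset.univ.filter (fun i => ¬ ((∑ j : Fin 5, d2 (i, j)) = a i)),
        (∑ j : Fin 5, d2 (i, j)) = 0 :=
      Finset.sum_eq_zero (fun i hi => (hd i).resolve_right (Finset.mem_filter.mp hi).2)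
    rw [hsum2] at hsplit
    omega
end
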